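/- The invertible elements of the irrational rotation algebra A are exactly the nonzero scalar multiples of the basis elements: A^× = { μ a_{pq} : μ ∈ ℂ^×, p,q ∈ ℤ }. -/

import Mathlib

/-- The invertible elements of the irrational rotation algebra are exactly the
nonzero scalar multiples of the basis elements: `A^× = {μ a_{pq} : μ ∈ ℂ^×, p,q ∈ ℤ}`. -/
theorem rotationAlgebra_units
    (lam : ℝ) (hlam : Irrational (lam / (2 * Real.pi)))
    (A : Type) [Ring A] [Algebra ℂ A]
    (a : ℤ → ℤ → A)
    (b : Module.Basis (ℤ × ℤ) ℂ A) (hb : ∀ n l : ℤ, b (n, l) = a n l)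
    (hmul : ∀ n₁ l₁ n₂ l₂ : ℤ,
      a n₁ l₁ * a n₂ l₂ =
        Complex.exp (Complex.I * (lam * n₁ * l₂)) • a (n₁ + n₂) (l₁ + l₂)) :
    ∀ x : A, IsUnit x ↔ ∃ (μ : ℂ) (p q : ℤ), μ ≠ 0 ∧ x = μ • a p q := by
  classical
  set c : ℤ × ℤ → ℤ × ℤ → ℂ :=
    fun i j => Complex.exp (Complex.I * ((lam : ℂ) * (i.1 : ℂ) * (j.2 : ℂ))) with hc
  have hc0 : ∀ i j, c i j ≠ 0 := fun i j => Complex.exp_ne_zero _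
  have hmul' : ∀ i j : ℤ × ℤ, b i * b j = c i j • b (i + j) := by
    intro i j
    have h1 : b i = a i.1 i.2 := hb i.1 i.2
    have h2 : b j = a j.1 j.2 := hb j.1 j.2
    have h3 : b (i + j) = a (i.1 + j.1) (i.2 + j.2) := hb _ _
    rw [h1, h2, h3, hmul]
  -- `b (0,0)` is the identity
  have hone : b (0, 0) = 1 := by
    have hL : (LinearMap.mulLeft ℂ (b (0, 0))) = LinearMap.id := by
      apply b.ext
      intro i
      rw [LinearMap.mulLeft_apply, hmul' (0, 0) i]
      simp [hc]
      exact congrArg b (zero_add i)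
    have := congrArg (fun L => L (1 : A)) hL
    simpa using this
  have hrepr_one : b.repr (1 : A) = Finsupp.single ((0, 0) : ℤ × ℤ) 1 := by
    rw [← hone, b.repr_self]
  -- the key coefficient formula for products
  have key : ∀ x y : A, ∀ k : ℤ × ℤ, b.repr (x * y) k =
      ∑ i ∈ (b.repr x).support, ∑ j ∈ (b.repr y).support,
        (if i + j = k then b.repr x i * b.repr y j * c i j else 0) := by
    intro x y k
    conv_lhs => rw [← b.linearCombination_repr x, ← b.linearCombination_repr y]
    rw [Finsupp.linearCombination_apply, Finsupp.linearCombination_apply,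
      Finsupp.sum, Finsupp.sum, Finset.sum_mul_sum]
    simp_rw [smul_mul_smul_comm, hmul', smul_smul]
    rw [map_sum, Finsupp.finset_sum_apply]
    refine Finset.sum_congr rfl fun i _ => ?_
    rw [map_sum, Finsupp.finset_sum_apply]
    refine Finset.sum_congr rfl fun j _ => ?_
    rw [map_smul, b.repr_self, Finsupp.smul_apply, Finsupp.single_apply]
    by_cases h : i + j = k <;> simp [h, mul_assoc]
  -- the weight function
  set φ : ℤ × ℤ → ℝ := fun p => (p.1 : ℝ) + Real.sqrt 2 * p.2 with hφ
  have hφ_add : ∀ p q : ℤ × ℤ, φ (p + q) = φ p + φ q := by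
    intro p q; simp only [hφ, Prod.fst_add, Prod.snd_add]; push_cast; ring
  have hφ_inj : Function.Injective φ := by
    intro p q hpq
    simp only [hφ] at hpq
    have h2 : p.2 = q.2 := by
      by_contra hne
      have h1 : ((p.2 - q.2 : ℤ) : ℝ) * Real.sqrt 2 = ((q.1 - p.1 : ℤ) : ℝ) := by
        push_cast; linarith
      have : Irrational (((p.2 - q.2 : ℤ) : ℝ) * Real.sqrt 2) :=
        irrational_sqrt_two.intCast_mul (sub_ne_zero.mpr hne)
      rw [h1] at this
      exact (q.1 - p.1).not_irrational this
    have h1 : p.1 = q.1 := by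
      rw [h2] at hpq
      have : (p.1 : ℝ) = (q.1 : ℝ) := by linarith
      exact_mod_cast this
    exact Prod.ext h1 h2
  intro x
  constructor
  · rintro ⟨u, rfl⟩
    by_cases htriv : (1 : A) = 0
    · have : Subsingleton A := subsingleton_of_zero_eq_one htriv.symm
      exact ⟨1, 0, 0, one_ne_zero, Subsingleton.elim _ _⟩
    set f : (ℤ × ℤ) →₀ ℂ := b.repr (u : A) with hfdef
    set g : (ℤ × ℤ) →₀ ℂ := b.repr ((u⁻¹ : Aˣ) : A) with hgdef
    have hf : f.support.Nonempty := by
      rw [Finsupp.support_nonempty_iff]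
      intro h
      have : (u : A) = 0 := by
        have := congrArg b.repr.symm h
        simpa [hfdef] using this
      exact htriv (by rw [← u.mul_inv, this, zero_mul])
    have hg : g.support.Nonempty := by
      rw [Finsupp.support_nonempty_iff]
      intro h
      have : ((u⁻¹ : Aˣ) : A) = 0 := by
        have := congrArg b.repr.symm h
        simpa [hgdef] using this
      exact htriv (by rw [← u.mul_inv, this, mul_zero])
    obtain ⟨i₀, hi₀s, hi₀⟩ := f.support.exists_max_image φ hf
    obtain ⟨j₀, hj₀s, hj₀⟩ := g.support.exists_max_image φ hg
    obtain ⟨m₀, hm₀s, hm₀⟩ := f.support.exists_min_image φ hf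
    obtain ⟨n₀, hn₀s, hn₀⟩ := g.support.exists_min_image φ hg
    -- coefficient of product at an extreme point is a single nonzero term
    have extreme : ∀ (i₁ : ℤ × ℤ), i₁ ∈ f.support → ∀ (j₁ : ℤ × ℤ), j₁ ∈ g.support →
        (∀ i ∈ f.support, ∀ j ∈ g.support, i + j = i₁ + j₁ → i = i₁ ∧ j = j₁) →
        i₁ + j₁ = (0, 0) := by
      intro i₁ hi₁s j₁ hj₁s huniq
      have hco : b.repr ((u : A) * ((u⁻¹ : Aˣ) : A)) (i₁ + j₁) = f i₁ * g j₁ * c i₁ j₁ := by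
        rw [key]
        rw [Finset.sum_eq_single i₁]
        · rw [Finset.sum_eq_single j₁]
          · simp [← hfdef, ← hgdef]
          · intro j hjs hj
            have : ¬ (i₁ + j = i₁ + j₁) := fun h => hj ((huniq i₁ hi₁s j hjs h).2)
            simp [← hfdef, ← hgdef, this]
          · intro h; exact absurd hj₁s h
        · intro i his hi
          apply Finset.sum_eq_zero
          intro j hjs
          have : ¬ (i + j = i₁ + j₁) := fun h => hi ((huniq i his j hjs h).1)
          simp [← hfdef, ← hgdef, this]
        · intro h; exact absurd hi₁s h
      rw [u.mul_inv, hrepr_one, Finsupp.single_apply] at hco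
      have hne : f i₁ * g j₁ * c i₁ j₁ ≠ 0 :=
        mul_ne_zero (mul_ne_zero (Finsupp.mem_support_iff.mp hi₁s)
          (Finsupp.mem_support_iff.mp hj₁s)) (hc0 i₁ j₁)
      by_contra hk
      rw [if_neg (fun h => hk h.symm)] at hco
      exact hne hco.symm
    have hmax : i₀ + j₀ = (0, 0) := by
      apply extreme i₀ hi₀s j₀ hj₀s
      intro i his j hjs hsum
      have h1 : φ i + φ j = φ i₀ + φ j₀ := by
        have := congrArg φ hsum
        rw [hφ_add, hφ_add] at this; exact this
      have hii : φ i = φ i₀ := le_antisymm (hi₀ i his) (by linarith [hj₀ j hjs])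
      have hjj : φ j = φ j₀ := by linarith
      exact ⟨hφ_inj hii, hφ_inj hjj⟩
    have hmin : m₀ + n₀ = (0, 0) := by
      apply extreme m₀ hm₀s n₀ hn₀s
      intro i his j hjs hsum
      have h1 : φ i + φ j = φ m₀ + φ n₀ := by
        have := congrArg φ hsum
        rw [hφ_add, hφ_add] at this; exact this
      have hii : φ i = φ m₀ := le_antisymm (by linarith [hn₀ j hjs]) (hm₀ i his)
      have hjj : φ j = φ n₀ := by linarith
      exact ⟨hφ_inj hii, hφ_inj hjj⟩
    -- the support of f is the singleton {i₀}
    have hφeq : φ m₀ = φ i₀ := by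
      have h1 : φ i₀ + φ j₀ = 0 := by
        have := congrArg φ hmax; rw [hφ_add] at this
        simpa [hφ] using this
      have h2 : φ m₀ + φ n₀ = 0 := by
        have := congrArg φ hmin; rw [hφ_add] at this
        simpa [hφ] using this
      have := hm₀ i₀ hi₀s
      have := hn₀ j₀ hj₀s
      linarith
    have hsupp : ∀ t ∈ f.support, t = i₀ := by
      intro t hts
      apply hφ_inj
      have := hm₀ t hts
      have := hi₀ t hts
      linarith [hφeq]
    have hfsingle : f = Finsupp.single i₀ (f i₀) := by
      ext t
      rcases eq_or_ne t i₀ with rfl | ht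
      · simp
      · rw [Finsupp.single_apply, if_neg (fun h => ht h.symm)]
        by_contra h
        exact ht (hsupp t (Finsupp.mem_support_iff.mpr h))
    refine ⟨f i₀, i₀.1, i₀.2, Finsupp.mem_support_iff.mp hi₀s, ?_⟩
    apply b.repr.injective
    have hba : a i₀.1 i₀.2 = b i₀ := (hb i₀.1 i₀.2).symm
    rw [hba, map_smul, b.repr_self, Finsupp.smul_single, smul_eq_mul, mul_one]
    exact hfsingle
  · rintro ⟨μ, p, q, hμ, rfl⟩
    set ν : ℂ := (μ * c (p, q) (-p, -q))⁻¹ with hν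
    set y : A := ν • a (-p) (-q) with hy
    have hcc : c ((-p, -q) : ℤ × ℤ) (p, q) = c ((p, q) : ℤ × ℤ) ((-p, -q) : ℤ × ℤ) := by
      simp only [hc]
      congr 1
      push_cast
      ring
    have hs1 : μ * ν * c ((p, q) : ℤ × ℤ) ((-p, -q) : ℤ × ℤ) = 1 := by
      calc μ * ν * c ((p, q) : ℤ × ℤ) ((-p, -q) : ℤ × ℤ)
          = (μ * c ((p, q) : ℤ × ℤ) ((-p, -q) : ℤ × ℤ)) *
            (μ * c ((p, q) : ℤ × ℤ) ((-p, -q) : ℤ × ℤ))⁻¹ := by rw [hν]; ring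
        _ = 1 := mul_inv_cancel₀ (mul_ne_zero hμ (hc0 _ _))
    have hs2 : ν * μ * c ((p, q) : ℤ × ℤ) ((-p, -q) : ℤ × ℤ) = 1 := by
      rw [mul_comm ν μ]; exact hs1
    have h1 : (μ • a p q) * y = 1 := by
      rw [hy, ← hb p q, ← hb (-p) (-q), smul_mul_smul_comm, hmul' (p, q) (-p, -q)]
      have h00 : ((p, q) : ℤ × ℤ) + (-p, -q) = (0, 0) := by simp
      rw [h00, hone, smul_smul, hs1, one_smul]
    have h2 : y * (μ • a p q) = 1 := by
      rw [hy, ← hb p q, ← hb (-p) (-q), smul_mul_smul_comm, hmul' (-p, -q) (p, q)]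
      have h00 : ((-p, -q) : ℤ × ℤ) + (p, q) = (0, 0) := by simp
      rw [h00, hone, smul_smul, hcc, hs2, one_smul]
    exact ⟨⟨μ • a p q, y, h1, h2⟩, rfl⟩
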